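/- With Δ_k defined recursively by Δ_0 = 0, Δ_1 = F_{p_1}, Δ_k = (q_{k-1}(u₁-1)(u₂-1)F_{p_k}+1)Δ_{k-1} + (u₁u₂)^{p_{k-1}}(F_{p_k}/F_{p_{k-1}})(Δ_{k-1}-Δ_{k-2}), for n ≥ 2 the diagonal part satisfies Δ_n^[n-2] = P₁ + P₂ + P₃, where, writing q(n) = ∏_{i=1}^{n-1} q_i and F(n) = ∏_{i=1}^{n} F_{p_i}: P₁ = (n-1)(u₁u₂+1)·q(n)·F(n)·(-u₁)^{n-2}, P₂ = Σ_{i=2}^{n} (q(n)/q_{i-1})·(F(n)/F_{p_i})·(-u₁)^{n-2}, and P₃ = Σ_{i=1}^{n-1} (u₁u₂)^{p_i}·(q(n)/q_i)·(F(n)/F_{p_i})·(-u₁)^{n-2}. -/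

import Mathlib

open Finset

noncomputable section

/-- Laurent polynomials in two variables `u₁, u₂` over `ℤ`. -/
abbrev L2 := AddMonoidAlgebra ℤ (ℤ × ℤ)

/-- The monomial `u₁^r * u₂^s`. -/
def mono (r s : ℤ) : L2 := AddMonoidAlgebra.single (r, s) 1

/-- The `i`-th diagonal part `P^[i]`: the sum of all monomials `a·u₁^r·u₂^s` of `P`
with `r - s = i`. -/
def diag (P : L2) (i : ℤ) : L2 :=
  AddMonoidAlgebra.ofCoeff (Finsupp.filter (fun p => p.1 - p.2 = i) P.coeff)

/-- `F r = Σ_{i=0}^{r-1} (u₁u₂)^i` for `r > 0`, `F 0 = 0`,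
`F r = -Σ_{i=r}^{-1} (u₁u₂)^i` for `r < 0`. -/
def F (r : ℤ) : L2 :=
  if 0 < r then ∑ i ∈ range r.toNat, mono i i
  else -∑ i ∈ range (-r).toNat, mono (-(i : ℤ) - 1) (-(i : ℤ) - 1)

namespace Aux
open scoped Pointwise

def Hom (d : ℤ) (P : L2) : Prop := ∀ x ∈ P.coeff.support, x.1 - x.2 = d

lemma hom_zero (d : ℤ) : Hom d 0 := by intro x hx; simp at hx

lemma hom_add {d : ℤ} {P Q : L2} (hP : Hom d P) (hQ : Hom d Q) : Hom d (P + Q) := by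
  intro x hx
  rw [AddMonoidAlgebra.coeff_add] at hx
  rcases Finset.mem_union.1 (Finsupp.support_add hx) with h | h
  exacts [hP x h, hQ x h]

lemma hom_neg {d : ℤ} {P : L2} (hP : Hom d P) : Hom d (-P) := by
  intro x hx; exact hP x (by rwa [AddMonoidAlgebra.coeff_neg, Finsupp.support_neg] at hx)

lemma hom_smul {d : ℤ} (z : ℤ) {P : L2} (hP : Hom d P) : Hom d (z • P) := by
  intro x hx; exact hP x (Finsupp.support_smul (by rwa [AddMonoidAlgebra.coeff_smul] at hx))

lemma hom_sum {d : ℤ} {ι : Type*} (s : Finset ι) (f : ι → L2) (h : ∀ i ∈ s, Hom d (f i)) :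
    Hom d (∑ i ∈ s, f i) :=
  Finset.sum_induction f (Hom d) (fun _ _ => hom_add) (hom_zero d) h

lemma hom_single (x : ℤ × ℤ) (c : ℤ) : Hom (x.1 - x.2) (AddMonoidAlgebra.single x c : L2) := by
  intro y hy
  rw [AddMonoidAlgebra.coeff_single] at hy
  have := Finsupp.support_single_subset hy
  simp only [Finset.mem_singleton] at this
  subst this; rfl

lemma hom_mono (r s : ℤ) : Hom (r - s) (mono r s) := hom_single (r, s) 1

lemma hom_one : Hom 0 (1 : L2) := by
  have := hom_single ((0 : ℤ), (0 : ℤ)) 1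
  simpa [AddMonoidAlgebra.one_def, Prod.mk_zero_zero] using this

lemma hom_mul {d e : ℤ} {P Q : L2} (hP : Hom d P) (hQ : Hom e Q) : Hom (d + e) (P * Q) := by
  intro x hx
  obtain ⟨a, ha, b, hb, rfl⟩ := Finset.mem_add.1 (AddMonoidAlgebra.support_coeff_mul_subset P Q hx)
  have h1 := hP a ha
  have h2 := hQ b hb
  simp only [Prod.fst_add, Prod.snd_add]
  omega

lemma hom_prod {ι : Type*} (s : Finset ι) (f : ι → L2) (h : ∀ i ∈ s, Hom 0 (f i)) :
    Hom 0 (∏ i ∈ s, f i) :=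
  Finset.prod_induction f (Hom 0) (fun a b ha hb => by simpa using hom_mul ha hb) hom_one h

lemma hom_F (r : ℤ) : Hom 0 (F r) := by
  unfold F
  split
  · exact hom_sum _ _ fun i _ => by simpa using hom_mono i i
  · exact hom_neg (hom_sum _ _ fun i _ => by simpa using hom_mono (-(i:ℤ)-1) (-(i:ℤ)-1))

lemma hom_pow {P : L2} (hP : Hom 1 P) (m : ℕ) : Hom (m : ℤ) (P ^ m) := by
  induction m with
  | zero => simpa using hom_one
  | succ t ih => rw [pow_succ]; push_cast; exact hom_mul ih hP

lemma diag_add (P Q : L2) (i : ℤ) : diag (P + Q) i = diag P i + diag Q i := by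
  unfold _root_.diag; rw [AddMonoidAlgebra.coeff_add, Finsupp.filter_add, AddMonoidAlgebra.ofCoeff_add]
lemma diag_zero (i : ℤ) : diag 0 i = 0 := by
  unfold _root_.diag; rw [AddMonoidAlgebra.coeff_zero, Finsupp.filter_zero, AddMonoidAlgebra.ofCoeff_zero]
lemma diag_neg (P : L2) (i : ℤ) : diag (-P) i = -diag P i := by
  unfold _root_.diag; rw [AddMonoidAlgebra.coeff_neg, Finsupp.filter_neg, AddMonoidAlgebra.ofCoeff_neg]
lemma diag_sub (P Q : L2) (i : ℤ) : diag (P - Q) i = diag P i - diag Q i := by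
  simp [sub_eq_add_neg, diag_add, diag_neg]
lemma diag_smul (z : ℤ) (P : L2) (i : ℤ) : diag (z • P) i = z • diag P i := by
  unfold _root_.diag; rw [AddMonoidAlgebra.coeff_smul, Finsupp.filter_smul, AddMonoidAlgebra.ofCoeff_smul]

lemma diag_eq_self_of_hom {d : ℤ} {P : L2} (h : Hom d P) : diag P d = P := by
  unfold _root_.diag
  rw [(Finsupp.filter_eq_self_iff _ _).2 fun x hx => h x (Finsupp.mem_support_iff.2 hx),
    AddMonoidAlgebra.ofCoeff_coeff]

lemma diag_eq_zero_of_hom {d e : ℤ} {P : L2} (h : Hom d P) (hde : d ≠ e) : diag P e = 0 := by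
  refine AddMonoidAlgebra.ext (Finsupp.ext fun a => ?_)
  rw [AddMonoidAlgebra.coeff_zero, Finsupp.zero_apply]
  show (Finsupp.filter (fun p : ℤ × ℤ => p.1 - p.2 = e) P.coeff) a = 0
  rw [Finsupp.filter_apply]
  split
  · next ha =>
    by_cases hs : a ∈ P.coeff.support
    · exact absurd ((h a hs).symm.trans ha) hde
    · simpa using Finsupp.notMem_support_iff.1 hs
  · rfl

lemma diag_hom_mul {d : ℤ} {Q : L2} (hQ : Hom d Q) (P : L2) (k : ℤ) :
    diag (Q * P) k = Q * diag P (k - d) := by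
  induction P using AddMonoidAlgebra.induction with
  | zero => simp [diag_zero]
  | single_add x c f hx hc ih =>
    rw [mul_add, diag_add, diag_add, mul_add, ih]
    congr 1
    by_cases hxk : x.1 - x.2 = k - d
    · have h1 := hom_mul hQ (hom_single x c)
      rw [show d + (x.1 - x.2) = k by omega] at h1
      rw [diag_eq_self_of_hom h1]
      rw [show diag (AddMonoidAlgebra.single x c : L2) (k - d) = AddMonoidAlgebra.single x c by
        unfold _root_.diag; rw [AddMonoidAlgebra.coeff_single, Finsupp.filter_single_of_pos (fun p : ℤ × ℤ => p.1 - p.2 = k - d) hxk]; rfl]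
    · have h1 := hom_mul hQ (hom_single x c)
      rw [diag_eq_zero_of_hom h1 (by omega)]
      rw [show diag (AddMonoidAlgebra.single x c : L2) (k - d) = 0 by
        unfold _root_.diag; rw [AddMonoidAlgebra.coeff_single, Finsupp.filter_single_of_neg (fun p : ℤ × ℤ => p.1 - p.2 = k - d) hxk]; rfl,
        mul_zero]

lemma F_ne_zero {r : ℤ} (hr : r ≠ 0) : F r ≠ 0 := by
  rcases lt_or_gt_of_ne hr with h | h
  · intro hF
    have := congrArg (fun f : L2 => f.coeff (-1, -1)) hF
    simp only [F, if_neg (by omega : ¬ 0 < r)] at this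
    rw [AddMonoidAlgebra.coeff_neg, Finsupp.neg_apply, AddMonoidAlgebra.coeff_sum,
        Finsupp.finset_sum_apply] at this
    rw [Finset.sum_eq_single 0 (by intro b _ hb; simp [mono, AddMonoidAlgebra.coeff_single, Finsupp.single_apply, Prod.ext_iff]; omega)
      (by intro hb; simp at hb; omega)] at this
    simp [mono, AddMonoidAlgebra.coeff_single, Finsupp.single_apply] at this
  · intro hF
    have := congrArg (fun f : L2 => f.coeff (0, 0)) hF
    simp only [F, if_pos h] at this
    rw [AddMonoidAlgebra.coeff_sum, Finsupp.finset_sum_apply] at this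
    rw [Finset.sum_eq_single 0 (by intro b _ hb; simp [mono, AddMonoidAlgebra.coeff_single, Finsupp.single_apply, Prod.ext_iff]; omega)
      (by intro hb; simp at hb; omega)] at this
    simp [mono, AddMonoidAlgebra.coeff_single, Finsupp.single_apply] at this

end Aux

namespace Aux

lemma diag_hom0_mul {Q : L2} (hQ : Hom 0 Q) (P : L2) (k : ℤ) :
    diag (Q * P) k = Q * diag P k := by simpa using diag_hom_mul hQ P k

lemma prod_Icc_erase_top {M : Type*} [CommMonoid M] (f : ℕ → M) (b j : ℕ) (hj : j ≤ b) :
    ∏ x ∈ (Icc 1 (b+1)).erase j, f x = f (b+1) * ∏ x ∈ (Icc 1 b).erase j, f x := by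
  have hs : (Icc 1 (b+1)).erase j = insert (b+1) ((Icc 1 b).erase j) := by
    ext x; simp only [mem_erase, mem_insert, mem_Icc]; omega
  rw [hs, Finset.prod_insert (by simp only [mem_erase, mem_Icc]; omega)]

lemma Icc_erase_top (b : ℕ) : (Icc 1 (b+1)).erase (b+1) = Icc 1 b := by
  ext x; simp only [mem_erase, mem_Icc]; omega

/-- top-diagonal value of `Δ (k+1)` -/
def Tv (p q : ℕ → ℤ) (k : ℕ) : L2 :=
  (∏ i ∈ Icc 1 k, q i) • ((∏ i ∈ Icc 1 (k+1), F (p i)) * (-(mono 1 0))^k)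

/-- second-diagonal value of `Δ (m+2)` -/
def Sv (p q : ℕ → ℤ) (m : ℕ) : L2 :=
  (((m:ℤ) + 1) * ∏ i ∈ Icc 1 (m+1), q i) •
      ((mono 1 1 + 1) * (∏ i ∈ Icc 1 (m+2), F (p i)) * (-(mono 1 0))^m)
  + (∑ i ∈ Icc 2 (m+2), (∏ j ∈ (Icc 1 (m+1)).erase (i-1), q j) •
      ((∏ j ∈ (Icc 1 (m+2)).erase i, F (p j)) * (-(mono 1 0))^m))
  + (∑ i ∈ Icc 1 (m+1), (∏ j ∈ (Icc 1 (m+1)).erase i, q j) •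
      (mono (p i) (p i) * (∏ j ∈ (Icc 1 (m+2)).erase i, F (p j)) * (-(mono 1 0))^m))

theorem key (n : ℕ) (p q : ℕ → ℤ) (hp : ∀ i, 1 ≤ i → i ≤ n → p i ≠ 0)
    (Δ : ℕ → L2) (h0 : Δ 0 = 0) (h1 : Δ 1 = F (p 1))
    (hrec : ∀ k, 2 ≤ k → k ≤ n →
      F (p (k - 1)) * Δ k =
        (q (k - 1) • ((mono 1 0 - 1) * (mono 0 1 - 1)) * F (p k) + 1) *
            (F (p (k - 1)) * Δ (k - 1))
          + mono (p (k - 1)) (p (k - 1)) * F (p k) * (Δ (k - 1) - Δ (k - 2))) :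
    ∀ k, k ≤ n →
      (∀ e : ℤ, (k:ℤ) - 1 < e → diag (Δ k) e = 0)
      ∧ (∀ m, k = m + 1 → diag (Δ k) (m : ℤ) = Tv p q m)
      ∧ (∀ m, k = m + 2 → diag (Δ k) (m : ℤ) = Sv p q m) := by
  intro k
  induction k using Nat.strong_induction_on with
  | _ k ih =>
  intro hk
  obtain _ | _ | t := k
  · refine ⟨?_, ?_, ?_⟩
    · intro e _; rw [h0, diag_zero]
    · intro m hm; exact absurd hm (by omega)
    · intro m hm; exact absurd hm (by omega)
  · refine ⟨?_, ?_, ?_⟩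
    · intro e he
      rw [h1]
      exact diag_eq_zero_of_hom (hom_F _) (by push_cast at he ⊢; omega)
    · intro m hm
      have hm0 : m = 0 := by omega
      subst hm0
      rw [h1, Nat.cast_zero, diag_eq_self_of_hom (hom_F _)]
      unfold Tv
      simp
    · intro m hm; exact absurd hm (by omega)
  · -- k = t + 2
    have hWhom : Hom 0 (mono 1 1) := by simpa using hom_mono 1 1
    have hUhom : Hom 1 (-(mono 1 0)) := hom_neg (by simpa using hom_mono 1 0)
    have hVhom : Hom (-1) (-(mono 0 1)) := hom_neg (by simpa using hom_mono 0 1)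
    have hMhom : Hom 0 (mono (p (t+1)) (p (t+1))) := by simpa using hom_mono (p (t+1)) (p (t+1))
    have hW : mono 1 0 * mono 0 1 = mono 1 1 := by
      simp [mono, AddMonoidAlgebra.single_mul_single]
    have hG : F (p (t+1)) ≠ 0 := F_ne_zero (hp (t+1) (by omega) (by omega))
    have hr := hrec (t+2) (by omega) hk
    have e1 : t + 2 - 1 = t + 1 := by omega
    have e2 : t + 2 - 2 = t := by omega
    rw [e1, e2] at hr
    have hr2 : F (p (t+1)) * Δ (t+2) =
        q (t+1) • (mono 1 1 * (F (p (t+2)) * (F (p (t+1)) * Δ (t+1))))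
      + q (t+1) • (F (p (t+2)) * (F (p (t+1)) * Δ (t+1)))
      + q (t+1) • ((-(mono 1 0)) * (F (p (t+2)) * (F (p (t+1)) * Δ (t+1))))
      + q (t+1) • ((-(mono 0 1)) * (F (p (t+2)) * (F (p (t+1)) * Δ (t+1))))
      + F (p (t+1)) * Δ (t+1)
      + mono (p (t+1)) (p (t+1)) * (F (p (t+2)) * Δ (t+1))
      - mono (p (t+1)) (p (t+1)) * (F (p (t+2)) * Δ t) := by
      rw [hr]
      simp only [zsmul_eq_mul]
      rw [← hW]
      ring
    have hm : ∀ e : ℤ, F (p (t+1)) * diag (Δ (t+2)) e =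
        q (t+1) • (mono 1 1 * (F (p (t+2)) * (F (p (t+1)) * diag (Δ (t+1)) e)))
      + q (t+1) • (F (p (t+2)) * (F (p (t+1)) * diag (Δ (t+1)) e))
      + q (t+1) • ((-(mono 1 0)) * (F (p (t+2)) * (F (p (t+1)) * diag (Δ (t+1)) (e-1))))
      + q (t+1) • ((-(mono 0 1)) * (F (p (t+2)) * (F (p (t+1)) * diag (Δ (t+1)) (e+1))))
      + F (p (t+1)) * diag (Δ (t+1)) e
      + mono (p (t+1)) (p (t+1)) * (F (p (t+2)) * diag (Δ (t+1)) e)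
      - mono (p (t+1)) (p (t+1)) * (F (p (t+2)) * diag (Δ t) e) := by
      intro e
      have h := congrArg (fun X => diag X e) hr2
      simp only [diag_add, diag_sub, diag_smul, diag_hom0_mul (hom_F (p (t+1))),
        diag_hom0_mul (hom_F (p (t+2))), diag_hom0_mul hWhom, diag_hom0_mul hMhom,
        diag_hom_mul hUhom, diag_hom_mul hVhom, sub_neg_eq_add] at h
      exact h
    have hB1 := (ih (t+1) (by omega) (by omega)).1
    have hT1 := (ih (t+1) (by omega) (by omega)).2.1 t rfl
    have hB0 := (ih t (by omega) (by omega)).1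
    refine ⟨?_, ?_, ?_⟩
    · -- B
      intro e he
      push_cast at he
      have h := hm e
      rw [hB1 e (by push_cast; omega), hB1 (e-1) (by push_cast; omega),
        hB1 (e+1) (by push_cast; omega), hB0 e (by push_cast; omega)] at h
      simp only [mul_zero, smul_zero, add_zero, zero_add, sub_zero, zero_sub, neg_zero] at h
      rcases mul_eq_zero.1 h with h' | h'
      · exact absurd h' hG
      · exact h'
    · -- T
      intro m hmk
      have hmt : m = t + 1 := by omega
      subst hmt
      have h := hm ((t+1 : ℕ) : ℤ)
      rw [show ((t+1 : ℕ) : ℤ) - 1 = ((t : ℕ) : ℤ) by push_cast; ring] at h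
      rw [hB1 ((t+1:ℕ):ℤ) (by push_cast; omega), hB1 (((t+1:ℕ):ℤ)+1) (by push_cast; omega),
        hB0 ((t+1:ℕ):ℤ) (by push_cast; omega), hT1] at h
      apply mul_left_cancel₀ hG
      rw [h]
      simp only [mul_zero, smul_zero, add_zero, zero_add, sub_zero]
      unfold Tv
      rw [show (∏ i ∈ Icc 1 (t+2), F (p i)) = (∏ i ∈ Icc 1 (t+1), F (p i)) * F (p (t+2)) from
          Finset.prod_Icc_succ_top (by omega) _,
        show (∏ i ∈ Icc 1 (t+1), q i) = (∏ i ∈ Icc 1 t, q i) * q (t+1) from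
          Finset.prod_Icc_succ_top (by omega) _,
        pow_succ]
      simp only [zsmul_eq_mul]
      push_cast
      ring
    · -- S
      intro m hmk
      have hmt : m = t := by omega
      rw [hmt]
      have h := hm ((t : ℕ) : ℤ)
      rw [hB1 (((t:ℕ):ℤ)+1) (by push_cast; omega), hB0 ((t:ℕ):ℤ) (by push_cast; omega), hT1] at h
      obtain _ | s := t
      · -- t = 0 : base case
        rw [show ((0 : ℕ) : ℤ) - 1 = (-1 : ℤ) by norm_num] at h
        rw [h1] at h
        rw [diag_eq_zero_of_hom (hom_F _) (by omega)] at h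
        apply mul_left_cancel₀ hG
        rw [h]
        simp only [mul_zero, smul_zero, add_zero, zero_add, sub_zero]
        unfold Sv Tv
        simp only [Icc_self, Finset.prod_singleton, Finset.sum_singleton,
          show (Icc 1 2).erase 2 = Icc 1 1 from Icc_erase_top 1,
          show (Icc 1 2).erase 1 = {2} from by ext x; simp only [mem_erase, mem_Icc, mem_singleton]; omega,
          show (Icc 2 2) = {2} from Icc_self 2,
          show (Icc 1 1).erase 0 = Icc 1 1 from by ext x; simp only [mem_erase, mem_Icc]; omega,
          show (Icc 1 1).erase 1 = ∅ from by simp [Finset.Icc_self],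
          Finset.prod_empty, Finset.erase_singleton,
          show Icc 1 0 = (∅ : Finset ℕ) from by simp,
          show (∏ i ∈ Icc 1 2, F (p i)) = (∏ i ∈ Icc 1 1, F (p i)) * F (p 2) from
            Finset.prod_Icc_succ_top (by omega) _]
        simp only [zsmul_eq_mul]
        push_cast
        ring
      · -- t = s + 1 : inductive case
        have hS1 := (ih (s+2) (by omega) (by omega)).2.2 s rfl
        rw [show ((s+1 : ℕ) : ℤ) - 1 = ((s : ℕ) : ℤ) by push_cast; ring, hS1] at h
        apply mul_left_cancel₀ hG
        rw [h]
        simp only [mul_zero, smul_zero, add_zero, zero_add, sub_zero]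
        unfold Sv Tv
        -- split off top terms of the target sums
        rw [Finset.sum_Icc_succ_top (show 2 ≤ s+3 by omega),
          Finset.sum_Icc_succ_top (show 1 ≤ s+2 by omega)]
        have hA : ∑ i ∈ Icc 2 (s+2), (∏ j ∈ (Icc 1 (s+2)).erase (i-1), q j) •
              ((∏ j ∈ (Icc 1 (s+3)).erase i, F (p j)) * (-(mono 1 0))^(s+1))
            = ∑ i ∈ Icc 2 (s+2), q (s+2) • ((-(mono 1 0)) * (F (p (s+3)) *
              ((∏ j ∈ (Icc 1 (s+1)).erase (i-1), q j) •
                ((∏ j ∈ (Icc 1 (s+2)).erase i, F (p j)) * (-(mono 1 0))^s)))) := by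
          refine Finset.sum_congr rfl fun i hi => ?_
          simp only [mem_Icc] at hi
          rw [prod_Icc_erase_top q (s+1) (i-1) (by omega),
            prod_Icc_erase_top (fun j => F (p j)) (s+2) i (by omega), pow_succ]
          simp only [zsmul_eq_mul]
          push_cast
          ring
        have hBsum : ∑ i ∈ Icc 1 (s+1), (∏ j ∈ (Icc 1 (s+2)).erase i, q j) •
              (mono (p i) (p i) * (∏ j ∈ (Icc 1 (s+3)).erase i, F (p j)) * (-(mono 1 0))^(s+1))
            = ∑ i ∈ Icc 1 (s+1), q (s+2) • ((-(mono 1 0)) * (F (p (s+3)) *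
              ((∏ j ∈ (Icc 1 (s+1)).erase i, q j) •
                (mono (p i) (p i) * (∏ j ∈ (Icc 1 (s+2)).erase i, F (p j)) * (-(mono 1 0))^s)))) := by
          refine Finset.sum_congr rfl fun i hi => ?_
          simp only [mem_Icc] at hi
          rw [prod_Icc_erase_top q (s+1) i (by omega),
            prod_Icc_erase_top (fun j => F (p j)) (s+2) i (by omega), pow_succ]
          simp only [zsmul_eq_mul]
          push_cast
          ring
        rw [hA, hBsum, ← Finset.smul_sum, ← Finset.mul_sum, ← Finset.mul_sum,
          ← Finset.smul_sum, ← Finset.mul_sum, ← Finset.mul_sum]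
        -- top terms of target sums
        rw [show (s+3) - 1 = s + 2 from by omega,
          Icc_erase_top (s+1),
          Icc_erase_top (s+2),
          prod_Icc_erase_top (fun j => F (p j)) (s+2) (s+2) (by omega),
          Icc_erase_top (s+1)]
        -- expand full-interval products and powers
        rw [show (∏ i ∈ Icc 1 (s+3), F (p i)) = (∏ i ∈ Icc 1 (s+2), F (p i)) * F (p (s+3)) from
            Finset.prod_Icc_succ_top (by omega) _,
          show (∏ i ∈ Icc 1 (s+2), F (p i)) = (∏ i ∈ Icc 1 (s+1), F (p i)) * F (p (s+2)) from
            Finset.prod_Icc_succ_top (by omega) _,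
          show (∏ i ∈ Icc 1 (s+2), q i) = (∏ i ∈ Icc 1 (s+1), q i) * q (s+2) from
            Finset.prod_Icc_succ_top (by omega) _]
        simp only [pow_succ, zsmul_eq_mul]
        push_cast
        ring

end Aux


/-- With `Δ_k` defined by the recursion (denominators cleared), for `n ≥ 2` the
diagonal part `Δ_n^[n-2]` equals `P₁ + P₂ + P₃` where, writing
`q(n) = ∏_{i=1}^{n-1} q_i` and `F(n) = ∏_{i=1}^{n} F_{p_i}`:
`P₁ = (n-1)(u₁u₂+1)·q(n)·F(n)·(-u₁)^{n-2}`,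
`P₂ = Σ_{i=2}^{n} (q(n)/q_{i-1})·(F(n)/F_{p_i})·(-u₁)^{n-2}`, and
`P₃ = Σ_{i=1}^{n-1} (u₁u₂)^{p_i}·(q(n)/q_i)·(F(n)/F_{p_i})·(-u₁)^{n-2}`
(the quotients are taken as the products with the corresponding factor omitted). -/
theorem diag_Delta_second (n : ℕ) (hn : 2 ≤ n) (p q : ℕ → ℤ)
    (hp : ∀ i, 1 ≤ i → i ≤ n → p i ≠ 0) (hq : ∀ i, 1 ≤ i → i ≤ n - 1 → q i ≠ 0)
    (Δ : ℕ → L2) (h0 : Δ 0 = 0) (h1 : Δ 1 = F (p 1))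
    (hrec : ∀ k, 2 ≤ k → k ≤ n →
      F (p (k - 1)) * Δ k =
        (q (k - 1) • ((mono 1 0 - 1) * (mono 0 1 - 1)) * F (p k) + 1) *
            (F (p (k - 1)) * Δ (k - 1))
          + mono (p (k - 1)) (p (k - 1)) * F (p k) * (Δ (k - 1) - Δ (k - 2))) :
    diag (Δ n) ((n : ℤ) - 2) =
      (((n : ℤ) - 1) * ∏ i ∈ Icc 1 (n - 1), q i) •
          ((mono 1 1 + 1) * (∏ i ∈ Icc 1 n, F (p i)) * (-(mono 1 0)) ^ (n - 2))
        + (∑ i ∈ Icc 2 n, (∏ j ∈ (Icc 1 (n - 1)).erase (i - 1), q j) •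
            ((∏ j ∈ (Icc 1 n).erase i, F (p j)) * (-(mono 1 0)) ^ (n - 2)))
        + (∑ i ∈ Icc 1 (n - 1), (∏ j ∈ (Icc 1 (n - 1)).erase i, q j) •
            (mono (p i) (p i) * (∏ j ∈ (Icc 1 n).erase i, F (p j)) *
              (-(mono 1 0)) ^ (n - 2))) := by
  obtain ⟨m, rfl⟩ : ∃ m, n = m + 2 := ⟨n - 2, by omega⟩
  have h := (Aux.key (m+2) p q hp Δ h0 h1 hrec (m+2) le_rfl).2.2 m rfl
  rw [show ((m+2 : ℕ) : ℤ) - 2 = ((m : ℕ) : ℤ) by push_cast; ring, h]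
  unfold Aux.Sv
  rw [show m + 2 - 1 = m + 1 from by omega, show m + 2 - 2 = m from by omega,
    show ((m+2 : ℕ) : ℤ) - 1 = ((m : ℕ) : ℤ) + 1 by push_cast; ring]
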